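/- Let F be a field, n ≥ 1 an integer, and t_1,…,t_n pairwise distinct elements of F. Let C be the n×n matrix over F with zero diagonal entries and off-diagonal entries C_{ij} = 1/(t_i − t_j) for i ≠ j. Then det(C) equals the sum, over all fixed-point-free involutions π of {1,…,n}, of the product over all pairs {i,j} with π(i) = j and j > i of 1/(t_i − t_j)². (In particular, when n is odd there are no fixed-point-free involutions, the sum is empty, and det(C) = 0.) -/

import Mathlib

open Finset Equiv Equiv.Perm

theorem Equiv.Perm.inv_apply_self {α : Type*} (f : Perm α) (x : α) : f⁻¹ (f x) = x :=
  f.symm_apply_apply x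

theorem Equiv.Perm.apply_inv_self {α : Type*} (f : Perm α) (x : α) : f (f⁻¹ x) = x :=
  f.apply_symm_apply x

theorem Equiv.Perm.sameCycle_inv_apply_left {α : Type*} {f : Perm α} {x y : α} :
    SameCycle f (f⁻¹ x) y ↔ SameCycle f x y :=
  sameCycle_symm_apply_left

theorem Equiv.Perm.sameCycle_inv_apply_right {α : Type*} {f : Perm α} {x y : α} :
    SameCycle f x (f⁻¹ y) ↔ SameCycle f x y :=
  sameCycle_symm_apply_right

private lemma sign_invol_aux (n : ℕ) : ∀ k : ℕ, ∀ σ : Perm (Fin n), σ * σ = 1 →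
    (univ.filter fun i => i < σ i).card = k → sign σ = (-1) ^ k := by
  intro k
  induction k with
  | zero =>
    intro σ hσ hc
    have hσσ : ∀ x, σ (σ x) = x := fun x => by
      have := congrArg (fun p => p x) hσ
      simpa [Perm.mul_apply] using this
    have hem : (univ.filter fun j : Fin n => j < σ j) = ∅ := Finset.card_eq_zero.mp hc
    have hσ1 : σ = 1 := by
      refine Equiv.ext fun i => ?_
      simp only [Perm.one_apply]
      by_contra h
      rcases lt_or_gt_of_ne (Ne.symm h) with hlt | hgt
      · have hmem : i ∈ univ.filter fun j : Fin n => j < σ j :=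
          mem_filter.mpr ⟨mem_univ i, hlt⟩
        rw [hem] at hmem
        exact absurd hmem (Finset.notMem_empty i)
      · have h2 : σ i < σ (σ i) := by rw [hσσ]; exact hgt
        have hmem : σ i ∈ univ.filter fun j : Fin n => j < σ j :=
          mem_filter.mpr ⟨mem_univ _, h2⟩
        rw [hem] at hmem
        exact absurd hmem (Finset.notMem_empty _)
    simp [hσ1]
  | succ k ih =>
    intro σ hσ hc
    have hne : (univ.filter fun i => i < σ i).Nonempty := by
      rw [← Finset.card_pos, hc]; omega
    obtain ⟨i, hi⟩ := hne
    have hilt : i < σ i := (mem_filter.mp hi).2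
    have hine : i ≠ σ i := ne_of_lt hilt
    have hσσ : ∀ x, σ (σ x) = x := fun x => by
      have := congrArg (fun p => p x) hσ
      simpa [Perm.mul_apply] using this
    set σ' := σ * Equiv.swap i (σ i) with hσ'def
    have v1 : σ' i = i := by
      simp [hσ'def, Perm.mul_apply, Equiv.swap_apply_left, hσσ]
    have v2 : σ' (σ i) = σ i := by
      simp [hσ'def, Perm.mul_apply, Equiv.swap_apply_right]
    have v3 : ∀ x, x ≠ i → x ≠ σ i → σ' x = σ x := by
      intro x h1 h2
      simp [hσ'def, Perm.mul_apply, Equiv.swap_apply_of_ne_of_ne h1 h2]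
    have hσ'inv : σ' * σ' = 1 := by
      refine Equiv.ext fun x => ?_
      simp only [Perm.mul_apply, Perm.one_apply]
      rcases eq_or_ne x i with rfl | h1
      · rw [v1, v1]
      · rcases eq_or_ne x (σ i) with rfl | h2
        · rw [v2, v2]
        · have e1 : σ x ≠ i := fun h => by
            apply h2; rw [← hσσ x, h]
          have e2 : σ x ≠ σ i := fun h => h1 (σ.injective h)
          rw [v3 x h1 h2, v3 _ e1 e2, hσσ]
    have hfilter : (univ.filter fun x => x < σ' x) = (univ.filter fun x => x < σ x).erase i := by
      ext x
      simp only [mem_filter, mem_erase, mem_univ, true_and]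
      rcases eq_or_ne x i with rfl | h1
      · rw [v1]; simp
      · rcases eq_or_ne x (σ i) with rfl | h2
        · rw [v2]
          simp only [lt_self_iff_false, false_iff, not_and]
          intro _
          rw [hσσ]; exact not_lt.mpr (le_of_lt hilt)
        · rw [v3 x h1 h2]
          tauto
    have hcard : (univ.filter fun x => x < σ' x).card = k := by
      rw [hfilter, Finset.card_erase_of_mem hi, hc]
      omega
    have hsign' := ih σ' hσ'inv hcard
    have hback : σ = σ' * Equiv.swap i (σ i) := by
      rw [hσ'def, mul_assoc, Equiv.swap_mul_self, mul_one]
    rw [hback, Equiv.Perm.sign_mul, hsign', Equiv.Perm.sign_swap hine, pow_succ]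


private lemma invol_term {F : Type*} [Field F] {n : ℕ} (t : Fin n → F)
    (σ : Perm (Fin n)) (hσ : σ * σ = 1) (hfpf : ∀ i, σ i ≠ i) :
    ((Equiv.Perm.sign σ : ℤ) : F) * (∏ i, (t (σ i) - t i)⁻¹) =
      ∏ i ∈ univ.filter (fun i : Fin n => i < σ i), ((t i - t (σ i)) ^ 2)⁻¹ := by
  have hσσ : ∀ x, σ (σ x) = x := fun x => by
    have := congrArg (fun p => p x) hσ
    simpa [Perm.mul_apply] using this
  set P := univ.filter (fun i : Fin n => i < σ i) with hP
  set k := P.card with hk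
  -- split the product
  have hsplit : (∏ i, (t (σ i) - t i)⁻¹) =
      (∏ i ∈ P, (t (σ i) - t i)⁻¹) * ∏ i ∈ univ.filter (fun i => ¬ i < σ i), (t (σ i) - t i)⁻¹ :=
    (Finset.prod_filter_mul_prod_filter_not univ _ _).symm
  have hQ : univ.filter (fun i : Fin n => ¬ i < σ i) = univ.filter (fun i : Fin n => σ i < i) := by
    ext x
    simp only [mem_filter, mem_univ, true_and]
    constructor
    · intro h; exact lt_of_le_of_ne (not_lt.mp h) (hfpf x)
    · intro h; exact not_lt.mpr (le_of_lt h)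
  have hQP : ∏ i ∈ univ.filter (fun i : Fin n => σ i < i), (t (σ i) - t i)⁻¹ =
      ∏ i ∈ P, (t i - t (σ i))⁻¹ := by
    refine Finset.prod_nbij' (fun i => σ i) (fun i => σ i) ?_ ?_ ?_ ?_ ?_
    · intro a ha
      simp only [hP, mem_filter, mem_univ, true_and] at ha ⊢
      rw [hσσ]
      exact ha
    · intro a ha
      simp only [hP, mem_filter, mem_univ, true_and] at ha ⊢
      rw [hσσ]
      exact ha
    · intro a _; exact hσσ a
    · intro a _; exact hσσ a
    · intro a ha
      rw [hσσ]
  have key : (∏ i, (t (σ i) - t i)⁻¹) = (-1 : F) ^ k * ∏ i ∈ P, ((t i - t (σ i)) ^ 2)⁻¹ := by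
    rw [hsplit, hQ, hQP, ← Finset.prod_mul_distrib]
    have : ∀ i ∈ P, (t (σ i) - t i)⁻¹ * (t i - t (σ i))⁻¹ = (-1 : F) * ((t i - t (σ i)) ^ 2)⁻¹ := by
      intro i _
      rw [← mul_inv]
      rw [show (t (σ i) - t i) * (t i - t (σ i)) = -((t i - t (σ i))^2) by ring, inv_neg]
      ring
    rw [Finset.prod_congr rfl this, Finset.prod_mul_distrib, Finset.prod_const]
  rw [key, sign_invol_aux n k σ hσ hk.symm]
  push_cast
  rw [← mul_assoc, ← pow_add]
  rw [Even.neg_one_pow ⟨k, rfl⟩, one_mul]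


private lemma cancel_sum {F : Type*} [Field F] {n : ℕ} (t : Fin n → F)
    (ht : Function.Injective t) (τ : Perm (Fin n)) (z : Fin n) (E : Finset (Fin n))
    (hτz : τ z = z)
    (hEτ : ∀ a ∈ E, τ a ∈ E) (hEτ' : ∀ a ∈ E, τ⁻¹ a ∈ E)
    (haz : ∀ a ∈ E, a ≠ z) (haτ : ∀ a ∈ E, τ a ≠ a) (haτz : ∀ a ∈ E, τ a ≠ z) :
    ∑ a ∈ E, ∏ i, (t ((τ * Equiv.swap a z) i) - t i)⁻¹ = 0 := by
  set g : Fin n → F := fun i => (t (τ i) - t i)⁻¹ with hg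
  set G : F := ∏ i ∈ univ.erase z, g i with hG
  have key : ∀ a ∈ E, (∏ i, (t ((τ * Equiv.swap a z) i) - t i)⁻¹) =
      ((t (τ a) - t z)⁻¹ + (t z - t a)⁻¹) * G := by
    intro a ha
    have haz' := haz a ha
    have haτ' := haτ a ha
    have haτz' := haτz a ha
    set σ := τ * Equiv.swap a z with hσ
    have hσz : σ z = τ a := by simp [hσ, Perm.mul_apply, Equiv.swap_apply_right]
    have hσa : σ a = z := by simp [hσ, Perm.mul_apply, Equiv.swap_apply_left, hτz]
    have hσi : ∀ i, i ≠ a → i ≠ z → σ i = τ i := by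
      intro i h1 h2
      simp [hσ, Perm.mul_apply, Equiv.swap_apply_of_ne_of_ne h1 h2]
    have hamem : a ∈ univ.erase z := Finset.mem_erase.mpr ⟨haz', mem_univ a⟩
    have step1 : (∏ i, (t (σ i) - t i)⁻¹) =
        (t (τ a) - t z)⁻¹ * ∏ i ∈ univ.erase z, (t (σ i) - t i)⁻¹ := by
      rw [← Finset.mul_prod_erase univ _ (mem_univ z), hσz]
    have step2 : (∏ i ∈ univ.erase z, (t (σ i) - t i)⁻¹) =
        (t z - t a)⁻¹ * ∏ i ∈ (univ.erase z).erase a, (t (σ i) - t i)⁻¹ := by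
      rw [← Finset.mul_prod_erase (univ.erase z) _ hamem, hσa]
    have step3 : (∏ i ∈ (univ.erase z).erase a, (t (σ i) - t i)⁻¹) =
        ∏ i ∈ (univ.erase z).erase a, g i := by
      refine Finset.prod_congr rfl fun i hi => ?_
      have h1 := Finset.mem_erase.mp hi
      have h2 := Finset.mem_erase.mp h1.2
      rw [hσi i h1.1 h2.1]
    have hga : g a ≠ 0 := by
      exact inv_ne_zero (sub_ne_zero.mpr (ht.ne haτ'))
    have step4 : (∏ i ∈ (univ.erase z).erase a, g i) = (t (τ a) - t a) * G := by
      have := Finset.mul_prod_erase (univ.erase z) g hamem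
      have h2 : (∏ i ∈ (univ.erase z).erase a, g i) = (g a)⁻¹ * G := by
        rw [hG, ← this, ← mul_assoc, inv_mul_cancel₀ hga, one_mul]
      rw [h2, hg]
      simp [inv_inv]
    rw [step1, step2, step3, step4]
    have hxz : t (τ a) - t z ≠ 0 := sub_ne_zero.mpr (ht.ne haτz')
    have hzy : t z - t a ≠ 0 := sub_ne_zero.mpr (ht.ne (Ne.symm haz'))
    have hident : (t (τ a) - t z)⁻¹ * ((t z - t a)⁻¹ * (t (τ a) - t a)) =
        (t (τ a) - t z)⁻¹ + (t z - t a)⁻¹ := by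
      field_simp
      ring
    rw [← mul_assoc, ← mul_assoc]
    rw [mul_assoc ((t (τ a) - t z)⁻¹) ((t z - t a)⁻¹) _, hident]
  rw [Finset.sum_congr rfl key, ← Finset.sum_mul]
  have hsum : (∑ a ∈ E, ((t (τ a) - t z)⁻¹ + (t z - t a)⁻¹)) = 0 := by
    rw [Finset.sum_add_distrib]
    have h1 : (∑ a ∈ E, (t (τ a) - t z)⁻¹) = ∑ a ∈ E, (t a - t z)⁻¹ := by
      refine Finset.sum_nbij' (fun a => τ a) (fun a => τ⁻¹ a) hEτ hEτ' ?_ ?_ ?_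
      · intro a _; exact Perm.inv_apply_self τ a
      · intro a _; exact Perm.apply_inv_self τ a
      · intro a _; rfl
    rw [h1]
    have h2 : ∀ a ∈ E, (t a - t z)⁻¹ = -(t z - t a)⁻¹ := by
      intro a _
      rw [← inv_neg, neg_sub]
    rw [Finset.sum_congr rfl h2, Finset.sum_neg_distrib]
    exact neg_add_cancel _
  rw [hsum, zero_mul]


private lemma cycle_closure {n : ℕ} (σ : Equiv.Perm (Fin n)) (p : Fin n → Prop)
    (h1 : ∀ x, p x → p (σ x)) (h2 : ∀ x, p x → p (σ⁻¹ x)) :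
    ∀ x y, σ.SameCycle x y → p x → p y := by
  have key : ∀ k : ℤ, ∀ x, p x → p ((σ ^ k) x) := by
    intro k
    induction k using Int.induction_on with
    | zero => intro x hx; simpa using hx
    | succ k ih =>
      intro x hx
      have h : (σ ^ ((k : ℤ) + 1)) x = (σ ^ (k : ℤ)) (σ x) := by
        rw [zpow_add_one, Perm.mul_apply]
      rw [h]; exact ih _ (h1 x hx)
    | pred k ih =>
      intro x hx
      have h : (σ ^ (-(k : ℤ) - 1)) x = (σ ^ (-(k : ℤ))) (σ⁻¹ x) := by
        rw [zpow_sub_one, Perm.mul_apply]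
      rw [h]; exact ih _ (h2 x hx)
  rintro x y ⟨k, rfl⟩ hx
  exact key k x hx


private def Sset {n : ℕ} (σ : Equiv.Perm (Fin n)) : Finset (Fin n) :=
  univ.filter (fun i => σ (σ i) ≠ i)

private lemma mem_Sset {n : ℕ} {σ : Equiv.Perm (Fin n)} {x : Fin n} :
    x ∈ Sset σ ↔ σ (σ x) ≠ x := by simp [Sset]

private def gmap {n : ℕ} (σ : Equiv.Perm (Fin n)) : Equiv.Perm (Fin n) :=
  if h : (Sset σ).Nonempty then
    σ * Equiv.swap (σ⁻¹ ((Sset σ).max' h)) ((Sset σ).max' h) else σ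

private lemma Sset_nonempty {n : ℕ} {σ : Equiv.Perm (Fin n)} (h : ¬ σ * σ = 1) :
    (Sset σ).Nonempty := by
  by_contra hc
  apply h
  refine Equiv.ext fun x => ?_
  simp only [Perm.mul_apply, Perm.one_apply]
  by_contra hx
  exact hc ⟨x, mem_Sset.mpr hx⟩

private lemma T_sum_zero {F : Type*} [Field F] {n : ℕ} (t : Fin n → F)
    (ht : Function.Injective t) (τ : Equiv.Perm (Fin n)) :
    ∑ σ ∈ univ.filter (fun σ : Equiv.Perm (Fin n) =>
        ((∀ i, σ i ≠ i) ∧ ¬ σ * σ = 1) ∧ gmap σ = τ),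
      (((Equiv.Perm.sign σ : ℤ) : F) * ∏ i, (t (σ i) - t i)⁻¹) = 0 := by
  set Fib := univ.filter (fun σ : Equiv.Perm (Fin n) =>
        ((∀ i, σ i ≠ i) ∧ ¬ σ * σ = 1) ∧ gmap σ = τ) with hFib
  by_cases hne : Fib.Nonempty
  swap
  · rw [Finset.not_nonempty_iff_eq_empty.mp hne, Finset.sum_empty]
  obtain ⟨σ0, hσ0⟩ := hne
  rw [hFib, Finset.mem_filter] at hσ0
  obtain ⟨-, ⟨hfpf0, hninv0⟩, hg0⟩ := hσ0
  have h00 : (Sset σ0).Nonempty := Sset_nonempty hninv0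
  set z := (Sset σ0).max' h00 with hz
  set c := σ0⁻¹ z with hc
  have hzprop : σ0 (σ0 z) ≠ z := mem_Sset.mp (Finset.max'_mem _ h00)
  have hmax : ∀ x, σ0 (σ0 x) ≠ x → x ≤ z :=
    fun x hx => Finset.le_max' _ x (mem_Sset.mpr hx)
  have hσ0c : σ0 c = z := Perm.apply_inv_self σ0 z
  have hczero : c ≠ z := fun h => hfpf0 z (h ▸ hσ0c)
  have hσ0zz : σ0 z ≠ z := hfpf0 z
  have hσ0zc : σ0 z ≠ c := fun h => hzprop (by rw [h, hσ0c])
  have hcS : σ0 (σ0 c) ≠ c := by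
    rw [hσ0c]
    exact fun h => hzprop (by rw [h, hσ0c])
  have hτ : τ = σ0 * Equiv.swap c z := by
    rw [← hg0]
    simp only [gmap, dif_pos h00, ← hz, ← hc]
  have hτc : τ c = σ0 z := by
    rw [hτ]; simp [Perm.mul_apply, Equiv.swap_apply_left]
  have hτz : τ z = z := by
    rw [hτ]; simp [Perm.mul_apply, Equiv.swap_apply_right, hσ0c]
  have hτo : ∀ x, x ≠ c → x ≠ z → τ x = σ0 x := by
    intro x h1 h2
    rw [hτ]; simp [Perm.mul_apply, Equiv.swap_apply_of_ne_of_ne h1 h2]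
  have hτfpf : ∀ x, x ≠ z → τ x ≠ x := by
    intro x hxz
    by_cases hxc : x = c
    · rw [hxc, hτc]; exact fun h => hσ0zc h
    · rw [hτo x hxc hxz]; exact hfpf0 x
  have hSτ : ∀ x, τ (τ x) ≠ x → x < z := by
    intro x hx
    by_contra hlt
    push_neg at hlt
    rcases eq_or_lt_of_le hlt with heq | hgt
    · apply hx; rw [← heq, hτz, hτz]
    · have hxn : σ0 (σ0 x) = x := by
        by_contra h; exact absurd (hmax x h) (not_le.mpr hgt)
      have hxz' : x ≠ z := ne_of_gt hgt
      have hxc' : x ≠ c := fun h => hcS (h ▸ hxn)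
      have hsx_c : σ0 x ≠ c := by
        intro h
        apply hxz'
        rw [← hxn, h, hσ0c]
      have hsx_z : σ0 x ≠ z := by
        intro h
        apply hxc'
        rw [hc, ← h, Perm.inv_apply_self]
      apply hx
      rw [hτo x hxc' hxz', hτo (σ0 x) hsx_c hsx_z, hxn]
  classical
  set E := univ.filter (fun a => τ a ≠ a ∧ ∀ b, τ.SameCycle a b → b < z) with hE
  have himage : Fib = E.image (fun a => τ * Equiv.swap a z) := by
    ext σ
    simp only [hFib, hE, Finset.mem_filter, Finset.mem_image, Finset.mem_univ, true_and]
    constructor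
    · rintro ⟨⟨hfpf, hninv⟩, hg⟩
      have h0' : (Sset σ).Nonempty := Sset_nonempty hninv
      set z' := (Sset σ).max' h0' with hz'
      set c' := σ⁻¹ z' with hc'
      have hτ' : τ = σ * Equiv.swap c' z' := by
        rw [← hg]
        simp only [gmap, dif_pos h0', ← hz', ← hc']
      have hσc' : σ c' = z' := Perm.apply_inv_self σ z'
      have hz'S : σ (σ z') ≠ z' := mem_Sset.mp (Finset.max'_mem _ h0')
      have hmax' : ∀ x, σ (σ x) ≠ x → x ≤ z' :=
        fun x hx => Finset.le_max' _ x (mem_Sset.mpr hx)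
      have hc'z' : c' ≠ z' := fun h => hfpf z' (h ▸ hσc')
      have hτz' : τ z' = z' := by
        rw [hτ']; simp [Perm.mul_apply, Equiv.swap_apply_right, hσc']
      have hzz' : z' = z := by
        by_contra h
        exact hτfpf z' h hτz'
      rw [hzz'] at hτ' hσc' hz'S hc'z'
      have hτc' : τ c' = σ z := by
        rw [hτ']; simp [Perm.mul_apply, Equiv.swap_apply_left]
      have hτo' : ∀ x, x ≠ c' → x ≠ z → τ x = σ x := by
        intro x h1 h2
        rw [hτ']; simp [Perm.mul_apply, Equiv.swap_apply_of_ne_of_ne h1 h2]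
      have hσinv : σ⁻¹ z = c' := by rw [hc', hzz']
      refine ⟨c', ⟨?_, ?_⟩, ?_⟩
      · -- τ c' ≠ c'
        rw [hτc']
        intro h
        exact hz'S (by rw [h, hσc'])
      · -- cycle bound
        intro b hb
        have hp : (fun y => y ≠ z ∧ σ.SameCycle z y) b := by
          refine cycle_closure τ (fun y => y ≠ z ∧ σ.SameCycle z y) ?_ ?_ c' b hb ⟨hc'z', ⟨-1, by rw [zpow_neg_one]; exact hσinv⟩⟩
          · rintro x ⟨hxz, hxc⟩
            by_cases h : x = c'
            · rw [h, hτc']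
              exact ⟨hfpf z, (Equiv.Perm.sameCycle_apply_right).mpr (Equiv.Perm.SameCycle.refl σ z)⟩
            · rw [hτo' x h hxz]
              refine ⟨?_, (Equiv.Perm.sameCycle_apply_right).mpr hxc⟩
              intro hh
              exact h (by rw [← hσinv, ← hh, Perm.inv_apply_self])
          · rintro x ⟨hxz, hxc⟩
            by_cases h1 : τ⁻¹ x = z
            · exfalso
              apply hxz
              rw [← hτz, ← h1, Perm.apply_inv_self]
            · by_cases h2 : τ⁻¹ x = c'
              · rw [h2]
                exact ⟨hc'z', ⟨-1, by rw [zpow_neg_one]; exact hσinv⟩⟩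
              · have hx1 : τ (τ⁻¹ x) = σ (τ⁻¹ x) := hτo' _ h2 h1
                rw [Perm.apply_inv_self] at hx1
                have hτσ : τ⁻¹ x = σ⁻¹ x := by
                  apply σ.injective
                  rw [Perm.apply_inv_self, ← hx1]
                rw [hτσ]
                refine ⟨hτσ ▸ h1, ?_⟩
                exact (Equiv.Perm.sameCycle_inv_apply_right).mpr hxc
        obtain ⟨hbz, hbcyc⟩ := hp
        have hbS : σ (σ b) ≠ b := by
          refine cycle_closure σ (fun y => σ (σ y) ≠ y) ?_ ?_ z b hbcyc hz'S
          · intro x hx h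
            exact hx (σ.injective h)
          · intro x hx h
            rw [Perm.apply_inv_self] at h
            exact hx (by rw [h, Perm.apply_inv_self])
        have := hmax' b hbS
        rw [hzz'] at this
        exact lt_of_le_of_ne this hbz
      · -- τ * swap c' z = σ
        rw [hτ', mul_assoc, Equiv.swap_mul_self, mul_one]
    · rintro ⟨a, ⟨haτ, hacyc⟩, rfl⟩
      have halt : a < z := hacyc a (Equiv.Perm.SameCycle.refl τ a)
      have haz : a ≠ z := ne_of_lt halt
      have haτz2 : τ a ≠ z := fun h => haz (τ.injective (h.trans hτz.symm))
      have hsa : (τ * Equiv.swap a z) a = z := by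
        simp [Perm.mul_apply, Equiv.swap_apply_left, hτz]
      have hsz : (τ * Equiv.swap a z) z = τ a := by
        simp [Perm.mul_apply, Equiv.swap_apply_right]
      have hso : ∀ x, x ≠ a → x ≠ z → (τ * Equiv.swap a z) x = τ x := by
        intro x h1 h2
        simp [Perm.mul_apply, Equiv.swap_apply_of_ne_of_ne h1 h2]
      have hfpf : ∀ i, (τ * Equiv.swap a z) i ≠ i := by
        intro i
        by_cases h1 : i = a
        · rw [h1, hsa]; exact Ne.symm haz
        · by_cases h2 : i = z
          · rw [h2, hsz]; exact haτz2
          · rw [hso i h1 h2]; exact hτfpf i h2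
      have hzS : (τ * Equiv.swap a z) ((τ * Equiv.swap a z) z) ≠ z := by
        rw [hsz, hso (τ a) (fun h => haτ h) haτz2]
        intro h
        exact haτz2 (τ.injective (h.trans hτz.symm))
      have hninv : ¬ (τ * Equiv.swap a z) * (τ * Equiv.swap a z) = 1 := by
        intro h
        apply hzS
        have := congrArg (fun p : Equiv.Perm (Fin n) => p z) h
        simpa [Perm.mul_apply] using this
      have h0'' : (Sset (τ * Equiv.swap a z)).Nonempty := ⟨z, mem_Sset.mpr hzS⟩
      have hmaxz : (Sset (τ * Equiv.swap a z)).max' h0'' = z := by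
        refine le_antisymm (Finset.max'_le _ _ _ ?_) (Finset.le_max' _ _ (mem_Sset.mpr hzS))
        intro x hx
        have hx' := mem_Sset.mp hx
        by_cases h1 : x = z
        · exact le_of_eq h1
        · by_cases h2 : x = a
          · exact le_of_lt (h2 ▸ halt)
          · by_cases hcyc : τ.SameCycle a x
            · exact le_of_lt (hacyc x hcyc)
            · have e1 : τ x ≠ a := by
                intro h
                exact hcyc ⟨-1, by rw [zpow_neg_one, ← h, Perm.inv_apply_self]⟩
              have e2 : τ x ≠ z := fun h => h1 (τ.injective (h.trans hτz.symm))
              rw [hso x h2 h1, hso (τ x) e1 e2] at hx'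
              exact le_of_lt (hSτ x hx')
      have hinvz : (τ * Equiv.swap a z)⁻¹ z = a := by
        apply (τ * Equiv.swap a z).injective
        rw [Perm.apply_inv_self, hsa]
      refine ⟨⟨hfpf, hninv⟩, ?_⟩
      unfold gmap
      rw [dif_pos h0'', hmaxz, hinvz, mul_assoc, Equiv.swap_mul_self, mul_one]
  have hinj : ∀ x ∈ E, ∀ y ∈ E, τ * Equiv.swap x z = τ * Equiv.swap y z → x = y := by
    intro x _ y _ h
    have h2 := congrArg (fun e : Equiv.Perm (Fin n) => e z) h
    simp only [Perm.mul_apply, Equiv.swap_apply_right] at h2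
    exact τ.injective h2
  rw [himage, Finset.sum_image hinj]
  have hterm : ∀ a ∈ E, ((Equiv.Perm.sign (τ * Equiv.swap a z) : ℤ) : F) *
      ∏ i, (t ((τ * Equiv.swap a z) i) - t i)⁻¹ =
      (-((Equiv.Perm.sign τ : ℤ) : F)) * ∏ i, (t ((τ * Equiv.swap a z) i) - t i)⁻¹ := by
    intro a ha
    obtain ⟨h1, h2⟩ := (Finset.mem_filter.mp ha).2
    have haz : a ≠ z := ne_of_lt (h2 a (Equiv.Perm.SameCycle.refl τ a))
    rw [Equiv.Perm.sign_mul, Equiv.Perm.sign_swap haz]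
    push_cast
    ring
  rw [Finset.sum_congr rfl hterm, ← Finset.mul_sum]
  have hEmem : ∀ a ∈ E, τ a ≠ a ∧ ∀ b, τ.SameCycle a b → b < z := by
    intro a ha
    exact (Finset.mem_filter.mp ha).2
  rw [cancel_sum t ht τ z E hτz ?_ ?_ ?_ ?_ ?_, mul_zero]
  · intro a ha
    obtain ⟨h1, h2⟩ := hEmem a ha
    rw [hE, Finset.mem_filter]
    refine ⟨Finset.mem_univ _, fun h => h1 (τ.injective h), fun b hb => h2 b ?_⟩
    exact (Equiv.Perm.sameCycle_apply_left).mp hb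
  · intro a ha
    obtain ⟨h1, h2⟩ := hEmem a ha
    rw [hE, Finset.mem_filter]
    refine ⟨Finset.mem_univ _, ?_, fun b hb => h2 b ?_⟩
    · rw [Perm.apply_inv_self]
      intro h
      apply h1
      rw [h, Perm.apply_inv_self]
      exact h
    · exact (Equiv.Perm.sameCycle_inv_apply_left).mp hb
  · intro a ha
    obtain ⟨h1, h2⟩ := hEmem a ha
    exact ne_of_lt (h2 a (Equiv.Perm.SameCycle.refl τ a))
  · intro a ha
    exact (hEmem a ha).1
  · intro a ha
    obtain ⟨h1, h2⟩ := hEmem a ha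
    exact ne_of_lt (h2 (τ a) ((Equiv.Perm.sameCycle_apply_right).mpr (Equiv.Perm.SameCycle.refl τ a)))




/-- For pairwise distinct `t 1, …, t n` in a field `F` (`n ≥ 1`), the
determinant of the matrix with zero diagonal and off-diagonal entries `1/(t i - t j)`
equals the sum, over all fixed-point-free involutions `π` of `{1,…,n}`, of
`∏_{i < π i} 1/(t i - t (π i))²`. -/
theorem det_cauchy_like_eq_sum_perfect_matchings {F : Type*} [Field F] (n : ℕ)
    (hn : 1 ≤ n) (t : Fin n → F) (ht : Function.Injective t) :
    Matrix.det (Matrix.of fun i j : Fin n => if i = j then 0 else (t i - t j)⁻¹) =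
    ∑ π ∈ Finset.univ.filter
        (fun π : Equiv.Perm (Fin n) => π * π = 1 ∧ ∀ i, π i ≠ i),
      ∏ i ∈ Finset.univ.filter (fun i : Fin n => i < π i),
        ((t i - t (π i)) ^ 2)⁻¹ := by
  classical
  rw [Matrix.det_apply']
  rw [← Finset.sum_filter_add_sum_filter_not Finset.univ (fun σ : Equiv.Perm (Fin n) => ∀ i, σ i ≠ i)]
  have hzero : ∑ σ ∈ univ.filter (fun σ : Equiv.Perm (Fin n) => ¬ ∀ i, σ i ≠ i),
      (((Equiv.Perm.sign σ : ℤ) : F) *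
        ∏ i, (Matrix.of fun i j : Fin n => if i = j then 0 else (t i - t j)⁻¹) (σ i) i) = 0 := by
    refine Finset.sum_eq_zero fun σ hσ => ?_
    have h := (Finset.mem_filter.mp hσ).2
    push_neg at h
    obtain ⟨i, hi⟩ := h
    have : (Matrix.of fun i j : Fin n => if i = j then 0 else (t i - t j)⁻¹) (σ i) i = 0 := by
      rw [Matrix.of_apply, if_pos hi]
    exact mul_eq_zero_of_right _ (Finset.prod_eq_zero (Finset.mem_univ i) this)
  rw [hzero, add_zero]
  have hterm : ∀ σ ∈ univ.filter (fun σ : Equiv.Perm (Fin n) => ∀ i, σ i ≠ i),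
      (((Equiv.Perm.sign σ : ℤ) : F) *
        ∏ i, (Matrix.of fun i j : Fin n => if i = j then 0 else (t i - t j)⁻¹) (σ i) i) =
      ((Equiv.Perm.sign σ : ℤ) : F) * ∏ i, (t (σ i) - t i)⁻¹ := by
    intro σ hσ
    have h := (Finset.mem_filter.mp hσ).2
    congr 1
    refine Finset.prod_congr rfl fun i _ => ?_
    rw [Matrix.of_apply, if_neg (h i)]
  rw [Finset.sum_congr rfl hterm]
  rw [← Finset.sum_filter_add_sum_filter_not
      (univ.filter (fun σ : Equiv.Perm (Fin n) => ∀ i, σ i ≠ i))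
      (fun σ : Equiv.Perm (Fin n) => σ * σ = 1)]
  have hT : ∑ σ ∈ (univ.filter (fun σ : Equiv.Perm (Fin n) => ∀ i, σ i ≠ i)).filter
      (fun σ => ¬ σ * σ = 1),
      (((Equiv.Perm.sign σ : ℤ) : F) * ∏ i, (t (σ i) - t i)⁻¹) = 0 := by
    rw [Finset.filter_filter]
    rw [← Finset.sum_fiberwise (Finset.univ.filter
        (fun σ : Equiv.Perm (Fin n) => (∀ i, σ i ≠ i) ∧ ¬ σ * σ = 1)) gmap
        (fun σ => (((Equiv.Perm.sign σ : ℤ) : F) * ∏ i, (t (σ i) - t i)⁻¹))]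
    refine Finset.sum_eq_zero fun τ _ => ?_
    rw [Finset.filter_filter]
    exact T_sum_zero t ht τ
  rw [hT, add_zero]
  have hset : (univ.filter (fun σ : Equiv.Perm (Fin n) => ∀ i, σ i ≠ i)).filter
      (fun σ => σ * σ = 1) =
      univ.filter (fun π : Equiv.Perm (Fin n) => π * π = 1 ∧ ∀ i, π i ≠ i) := by
    rw [Finset.filter_filter]
    apply Finset.filter_congr
    intro σ _
    tauto
  rw [hset]
  refine Finset.sum_congr rfl fun σ hσ => ?_
  obtain ⟨hinv, hfpf⟩ := (Finset.mem_filter.mp hσ).2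
  exact invol_term t σ hinv hfpf
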